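/- Let d ≥ 2 and κ ≥ 1 be coprime integers, and let e = d if 4 divides d, e = 2d if d is odd, and e = d/2 if d ≡ 2 (mod 4). For all integers i > j ≥ 0, π_{κ/d}((−q)^{i+e} − (−q)^j) − π_{κ/d}((−q)^i − (−q)^j) = 2κe/d. -/

import Mathlib

open Polynomial

/-- `argCount t f` is the cardinality of the multiset `Arg_t(f)` of real numbers `λ` with
`0 < λ ≤ 2πt` such that `e^{iλ}` is a (complex) root of the real polynomial `f`, each such `λ`
counted with the multiplicity of `e^{iλ}` as a root of `f`. -/
noncomputable def argCount (t : ℝ) (f : Polynomial ℝ) : ℕ :=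
  ((f.map (algebraMap ℝ ℂ)).roots.map fun ξ =>
    Nat.card {l : ℝ // 0 < l ∧ l ≤ 2 * Real.pi * t ∧ Complex.exp ((l : ℂ) * Complex.I) = ξ}).sum

/-- `piFn κ d f` is the rational number
`π_{κ/d}(f) = (a(f) + A(f))·(κ/d) + |Arg_{κ/d}(f)| + (1/2)·(multiplicity of 1 as a root of f)`,
where `a(f)` is the multiplicity of `0` as a root of `f` and `A(f)` is the degree of `f`. -/
noncomputable def piFn (κ d : ℕ) (f : Polynomial ℝ) : ℚ :=
  ((rootMultiplicity 0 f : ℚ) + (f.natDegree : ℚ)) * (κ : ℚ) / (d : ℚ)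
    + (argCount ((κ : ℝ) / (d : ℝ)) f : ℚ) + (rootMultiplicity 1 f : ℚ) / 2

private lemma factor_id (R : Type*) [CommRing R] (j m : ℕ) : ((-X)^(j+m) - (-X)^j : R[X]) =
    C ((-1)^(j+m)) * (X ^ j * (X^m - C ((-1)^m))) := by
  simp only [map_pow, map_neg, map_one]
  ring_nf
  rw [mul_comm m 2, pow_mul, neg_one_sq, one_pow, mul_one]

private lemma fiber_sum {α β : Type*} [DecidableEq β] (P₁ P₂ : α → Prop) (φ : α → β)
    (F : Finset β) (hfin : {l : α | P₁ l ∧ P₂ l ∧ φ l ∈ F}.Finite) :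
    ∑ ξ ∈ F, Nat.card {l : α // P₁ l ∧ P₂ l ∧ φ l = ξ}
      = Nat.card {l : α // P₁ l ∧ P₂ l ∧ φ l ∈ F} := by
  induction F using Finset.induction with
  | empty =>
      have : IsEmpty {l : α // P₁ l ∧ P₂ l ∧ φ l ∈ (∅ : Finset β)} :=
        ⟨fun l => by simpa using l.2.2.2⟩
      simp [Nat.card_of_isEmpty]
  | @insert a F ha ih =>
      have hsub : {l : α | P₁ l ∧ P₂ l ∧ φ l ∈ F}.Finite :=
        hfin.subset (fun l hl => ⟨hl.1, hl.2.1, Finset.mem_insert_of_mem hl.2.2⟩)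
      have hfa : {l : α | P₁ l ∧ P₂ l ∧ φ l = a}.Finite :=
        hfin.subset (fun l hl => ⟨hl.1, hl.2.1, hl.2.2 ▸ Finset.mem_insert_self a F⟩)
      rw [Finset.sum_insert ha, ih hsub]
      have e1 : Nat.card {l : α // P₁ l ∧ P₂ l ∧ φ l = a}
          = ({l : α | P₁ l ∧ P₂ l ∧ φ l = a} : Set α).ncard := Nat.card_coe_set_eq _
      have e2 : Nat.card {l : α // P₁ l ∧ P₂ l ∧ φ l ∈ F}
          = ({l : α | P₁ l ∧ P₂ l ∧ φ l ∈ F} : Set α).ncard := Nat.card_coe_set_eq _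
      have e3 : Nat.card {l : α // P₁ l ∧ P₂ l ∧ φ l ∈ insert a F}
          = ({l : α | P₁ l ∧ P₂ l ∧ φ l ∈ insert a F} : Set α).ncard := Nat.card_coe_set_eq _
      have hset : {l : α | P₁ l ∧ P₂ l ∧ φ l ∈ insert a F}
          = {l : α | P₁ l ∧ P₂ l ∧ φ l = a} ∪ {l : α | P₁ l ∧ P₂ l ∧ φ l ∈ F} := by
        ext l
        simp only [Set.mem_setOf_eq, Finset.mem_insert, Set.mem_union]
        tauto
      have hd : Disjoint {l : α | P₁ l ∧ P₂ l ∧ φ l = a} {l : α | P₁ l ∧ P₂ l ∧ φ l ∈ F} := by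
        rw [Set.disjoint_left]
        rintro l ⟨_, _, rfl⟩ ⟨_, _, h⟩
        exact ha h
      rw [e1, e2, e3, hset, Set.ncard_union_eq hd hfa hsub]

private lemma floor_idn (n : ℤ) (d : ℕ) : ⌊(n:ℝ)/(d:ℝ)⌋ = n / d := by
  rw [show ((n:ℝ)/(d:ℝ)) = ((n/(d:ℚ) : ℚ) : ℝ) by push_cast; ring, Rat.floor_cast,
    Rat.floor_intCast_div_natCast]

private lemma S_equiv (κ d m : ℕ) (hd : 0 < d) (hm : 0 < m) :
    Nonempty ({k : ℤ // k ∈ Finset.Ioc ((-(m:ℤ))/2) (((m:ℤ)*(2*(κ:ℤ) - d))/(2*(d:ℤ)))} ≃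
      {l : ℝ // 0 < l ∧ l ≤ 2 * Real.pi * ((κ:ℝ)/(d:ℝ)) ∧
        Complex.exp ((l:ℂ) * Complex.I) ^ m = (-1)^m}) := by
  have hmR : (0:ℝ) < m := by exact_mod_cast hm
  have hdR : (0:ℝ) < d := by exact_mod_cast hd
  have hpi := Real.pi_pos
  -- the function
  set A : ℤ := (-(m:ℤ))/2 with hA
  set B : ℤ := ((m:ℤ)*(2*(κ:ℤ) - d))/(2*(d:ℤ)) with hB
  have memA : ∀ k : ℤ, A < k ↔ (0:ℤ) < m + 2*k := by
    intro k; rw [hA]; omega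
  have memB : ∀ k : ℤ, k ≤ B ↔ (d:ℤ)*(m + 2*k) ≤ 2*κ*m := by
    intro k
    rw [hB, Int.le_ediv_iff_mul_le (by positivity)]
    constructor <;> intro h <;> nlinarith
  -- key real facts about lk := π + 2πk/m
  have keypos : ∀ k : ℤ, (0 < Real.pi + 2*Real.pi*k/m) ↔ (0:ℤ) < m + 2*k := by
    intro k
    have h1 : Real.pi + 2*Real.pi*k/m = (Real.pi/m) * (m + 2*k) := by field_simp
    rw [h1, mul_pos_iff_of_pos_left (by positivity)]
    have : ((m:ℝ) + 2*(k:ℝ)) = (((m:ℤ) + 2*k : ℤ) : ℝ) := by push_cast; ring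
    rw [this]
    exact_mod_cast Iff.rfl
  have keyle : ∀ k : ℤ, (Real.pi + 2*Real.pi*k/m ≤ 2 * Real.pi * ((κ:ℝ)/(d:ℝ)))
      ↔ (d:ℤ)*((m:ℤ) + 2*k) ≤ 2*κ*m := by
    intro k
    have h1 : Real.pi + 2*Real.pi*k/m = (Real.pi/(m*d)) * ((d:ℝ)*(m + 2*k)) := by
      field_simp
    have h2 : 2 * Real.pi * ((κ:ℝ)/(d:ℝ)) = (Real.pi/(m*d)) * (2*κ*m) := by
      field_simp
    rw [h1, h2, mul_le_mul_iff_right₀ (by positivity)]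
    have e1 : ((d:ℝ)*((m:ℝ) + 2*(k:ℝ))) = (((d:ℤ)*((m:ℤ) + 2*k) : ℤ) : ℝ) := by push_cast; ring
    have e2 : (2*(κ:ℝ)*(m:ℝ)) = ((2*(κ:ℤ)*(m:ℤ) : ℤ) : ℝ) := by push_cast; ring
    rw [e1, e2]
    exact_mod_cast Iff.rfl
  have keyexp : ∀ k : ℤ, Complex.exp ((↑(Real.pi + 2*Real.pi*k/m) : ℂ) * Complex.I) ^ m
      = (-1 : ℂ)^m := by
    intro k
    rw [← Complex.exp_nat_mul]
    have h1 : (m:ℂ) * ((↑(Real.pi + 2*Real.pi*(k:ℝ)/(m:ℝ)) : ℂ) * Complex.I)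
        = (m:ℂ)*((Real.pi:ℂ)*Complex.I) + (k:ℤ)*(2*(Real.pi:ℂ)*Complex.I) := by
      push_cast
      have : (m:ℂ) ≠ 0 := by exact_mod_cast hmR.ne'
      field_simp
    rw [h1, Complex.exp_add, Complex.exp_int_mul_two_pi_mul_I, mul_one,
      Complex.exp_nat_mul, Complex.exp_pi_mul_I]
  set S := {l : ℝ // 0 < l ∧ l ≤ 2 * Real.pi * ((κ:ℝ)/(d:ℝ)) ∧
        Complex.exp ((l:ℂ) * Complex.I) ^ m = (-1 : ℂ)^m} with hS
  let f : {k : ℤ // k ∈ Finset.Ioc A B} → S := fun k =>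
    ⟨Real.pi + 2*Real.pi*(k.1:ℝ)/(m:ℝ),
      (keypos k.1).mpr ((memA k.1).mp (Finset.mem_Ioc.mp k.2).1),
      (keyle k.1).mpr ((memB k.1).mp (Finset.mem_Ioc.mp k.2).2),
      keyexp k.1⟩
  have hinj : Function.Injective f := by
    rintro ⟨a, _⟩ ⟨b, _⟩ hab
    have h : Real.pi + 2*Real.pi*(a:ℝ)/(m:ℝ) = Real.pi + 2*Real.pi*(b:ℝ)/(m:ℝ) :=
      congrArg Subtype.val hab
    field_simp at h
    exact Subtype.ext (show a = b by have h' : (a:ℝ) = b := (by linarith); exact_mod_cast h')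
  have hsurj : Function.Surjective f := by
    rintro ⟨l, hl0, hlT, hlm⟩
    have h1 : Complex.exp ((m:ℂ)*((l:ℂ)*Complex.I))
        = Complex.exp ((m:ℂ)*((Real.pi:ℂ)*Complex.I)) := by
      rw [Complex.exp_nat_mul, Complex.exp_nat_mul, hlm, Complex.exp_pi_mul_I]
    obtain ⟨n, hn⟩ := Complex.exp_eq_exp_iff_exists_int.mp h1
    have h2 : ((m*l : ℝ):ℂ) * Complex.I = ((m*Real.pi + n*(2*Real.pi) : ℝ):ℂ) * Complex.I := by
      push_cast
      push_cast at hn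
      linear_combination hn
    have h3 : (m*l : ℝ) = m*Real.pi + n*(2*Real.pi) :=
      Complex.ofReal_inj.mp (mul_right_cancel₀ Complex.I_ne_zero h2)
    have h4 : l = Real.pi + 2*Real.pi*(n:ℝ)/(m:ℝ) := by
      field_simp
      linarith
    refine ⟨⟨n, Finset.mem_Ioc.mpr ⟨(memA n).mpr ((keypos n).mp (h4 ▸ hl0)),
      (memB n).mpr ((keyle n).mp (h4 ▸ hlT))⟩⟩, ?_⟩
    exact Subtype.ext h4.symm
  exact ⟨Equiv.ofBijective f ⟨hinj, hsurj⟩⟩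

private lemma argCount_eq (κ d m j : ℕ) (hd : 0 < d) (hm : 0 < m) :
    argCount ((κ:ℝ)/(d:ℝ)) ((-X)^(j+m) - (-X)^j : ℝ[X])
      = (Finset.Ioc ((-(m:ℤ))/2) (((m:ℤ)*(2*(κ:ℤ) - d))/(2*(d:ℤ)))).card := by
  have hmap : (((-X)^(j+m) - (-X)^j : ℝ[X])).map (algebraMap ℝ ℂ)
      = ((-X)^(j+m) - (-X)^j : ℂ[X]) := by
    simp
  have hXj : (X : ℂ[X])^j ≠ 0 := pow_ne_zero _ X_ne_zero
  have hne : ((X : ℂ[X])^m - C ((-1)^m)) ≠ 0 := X_pow_sub_C_ne_zero hm _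
  have hc : ((-1 : ℂ)^m) ≠ 0 := by simp
  have hroots : ((-X)^(j+m) - (-X)^j : ℂ[X]).roots
      = j • ({0} : Multiset ℂ) + nthRoots m ((-1)^m : ℂ) := by
    rw [factor_id, roots_C_mul _ (by simp : ((-1:ℂ)^(j+m)) ≠ 0),
      roots_mul (mul_ne_zero hXj hne), roots_pow, roots_X]
    rfl
  have hnodup : (nthRoots m ((-1)^m : ℂ)).Nodup :=
    nodup_roots (separable_X_pow_sub_C _ (Nat.cast_ne_zero.mpr hm.ne' : (m:ℂ) ≠ 0) hc)
  rw [argCount, hmap, hroots, Multiset.map_add, Multiset.sum_add]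
  have hg0 : Nat.card {l : ℝ // 0 < l ∧ l ≤ 2*Real.pi*((κ:ℝ)/(d:ℝ)) ∧
      Complex.exp ((l:ℂ)*Complex.I) = (0:ℂ)} = 0 := by
    have : IsEmpty {l : ℝ // 0 < l ∧ l ≤ 2*Real.pi*((κ:ℝ)/(d:ℝ)) ∧
        Complex.exp ((l:ℂ)*Complex.I) = (0:ℂ)} :=
      ⟨fun l => Complex.exp_ne_zero _ l.2.2.2⟩
    exact Nat.card_of_isEmpty
  rw [Multiset.map_nsmul]
  simp only [Multiset.map_singleton, hg0, Multiset.sum_nsmul, Multiset.sum_singleton,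
    smul_zero, zero_add]
  -- now the nthRoots part
  set F := (nthRoots m ((-1)^m : ℂ)).toFinset with hF
  have hval : nthRoots m ((-1)^m : ℂ) = F.val := by
    rw [hF, Multiset.toFinset_val, Multiset.dedup_eq_self.mpr hnodup]
  rw [hval]
  have hsum : (Multiset.map (fun ξ => Nat.card {l : ℝ // 0 < l ∧
      l ≤ 2*Real.pi*((κ:ℝ)/(d:ℝ)) ∧ Complex.exp ((l:ℂ)*Complex.I) = ξ}) F.val).sum
      = ∑ ξ ∈ F, Nat.card {l : ℝ // 0 < l ∧
      l ≤ 2*Real.pi*((κ:ℝ)/(d:ℝ)) ∧ Complex.exp ((l:ℂ)*Complex.I) = ξ} := rfl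
  rw [hsum]
  obtain ⟨eqv⟩ := S_equiv κ d m hd hm
  have hmem : ∀ l : ℝ, (Complex.exp ((l:ℂ)*Complex.I) ∈ F)
      ↔ Complex.exp ((l:ℂ)*Complex.I)^m = (-1:ℂ)^m := fun l => by
    rw [hF, Multiset.mem_toFinset, mem_nthRoots hm]
  have hfinS : Finite {l : ℝ // 0 < l ∧ l ≤ 2*Real.pi*((κ:ℝ)/(d:ℝ)) ∧
      Complex.exp ((l:ℂ)*Complex.I)^m = (-1:ℂ)^m} := Finite.of_equiv _ eqv
  have hfin : {l : ℝ | 0 < l ∧ l ≤ 2*Real.pi*((κ:ℝ)/(d:ℝ)) ∧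
      Complex.exp ((l:ℂ)*Complex.I) ∈ F}.Finite := by
    have h1 : {l : ℝ | 0 < l ∧ l ≤ 2*Real.pi*((κ:ℝ)/(d:ℝ)) ∧
        Complex.exp ((l:ℂ)*Complex.I) ∈ F}
        = {l : ℝ | 0 < l ∧ l ≤ 2*Real.pi*((κ:ℝ)/(d:ℝ)) ∧
        Complex.exp ((l:ℂ)*Complex.I)^m = (-1:ℂ)^m} := by
      ext l; simp only [Set.mem_setOf_eq, hmem l]
    rw [h1, ← Set.finite_coe_iff]
    exact hfinS
  rw [fiber_sum _ _ _ F hfin]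
  have e1 : Nat.card {l : ℝ // 0 < l ∧ l ≤ 2*Real.pi*((κ:ℝ)/(d:ℝ)) ∧
      Complex.exp ((l:ℂ)*Complex.I) ∈ F}
      = Nat.card {l : ℝ // 0 < l ∧ l ≤ 2*Real.pi*((κ:ℝ)/(d:ℝ)) ∧
      Complex.exp ((l:ℂ)*Complex.I)^m = (-1:ℂ)^m} :=
    Nat.card_congr (Equiv.subtypeEquivRight (fun l =>
      and_congr_right fun _ => and_congr_right fun _ => hmem l))
  rw [e1, Nat.card_congr eqv.symm, Nat.card_eq_fintype_card, Fintype.card_coe]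
private lemma natDeg (j m : ℕ) (hm : 0 < m) :
    (((-X)^(j+m) - (-X)^j : ℝ[X])).natDegree = j + m := by
  rw [factor_id, natDegree_C_mul (by simp : ((-1:ℝ)^(j+m)) ≠ 0),
    natDegree_mul (pow_ne_zero _ X_ne_zero) (X_pow_sub_C_ne_zero hm _),
    natDegree_pow, natDegree_X, natDegree_X_pow_sub_C, mul_one]

private lemma fne (j m : ℕ) (hm : 0 < m) : (((-X)^(j+m) - (-X)^j : ℝ[X])) ≠ 0 := by
  intro h
  have h2 := natDeg j m hm
  rw [h] at h2
  simp at h2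
  omega

private lemma rm0 (j m : ℕ) (hm : 0 < m) :
    rootMultiplicity 0 (((-X)^(j+m) - (-X)^j : ℝ[X])) = j := by
  have h := factor_id ℝ j m
  rw [h, rootMultiplicity_mul (by rw [← h]; exact fne j m hm), rootMultiplicity_C,
    rootMultiplicity_mul (mul_ne_zero (pow_ne_zero _ X_ne_zero) (X_pow_sub_C_ne_zero hm _))]
  have h1 : rootMultiplicity 0 ((X:ℝ[X])^j) = j := by
    simpa using rootMultiplicity_X_sub_C_pow (0:ℝ) j
  have h2 : rootMultiplicity 0 ((X:ℝ[X])^m - C ((-1)^m)) = 0 := by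
    apply rootMultiplicity_eq_zero
    simp [IsRoot, zero_pow hm.ne']
  rw [h1, h2]
  omega

private lemma rm1 (j m : ℕ) (hm : 0 < m) :
    rootMultiplicity 1 (((-X)^(j+m) - (-X)^j : ℝ[X])) = if Even m then 1 else 0 := by
  have h := factor_id ℝ j m
  rw [h, rootMultiplicity_mul (by rw [← h]; exact fne j m hm), rootMultiplicity_C,
    rootMultiplicity_mul (mul_ne_zero (pow_ne_zero _ X_ne_zero) (X_pow_sub_C_ne_zero hm _))]
  have h1 : rootMultiplicity 1 ((X:ℝ[X])^j) = 0 := by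
    apply rootMultiplicity_eq_zero
    simp [IsRoot]
  rw [h1]
  by_cases hev : Even m
  · rw [hev.neg_one_pow]
    have hne1 : ((X:ℝ[X])^m - C 1) ≠ 0 := X_pow_sub_C_ne_zero hm _
    have hsq : Squarefree ((X:ℝ[X])^m - C 1) :=
      (separable_X_pow_sub_C (1:ℝ) (Nat.cast_ne_zero.mpr hm.ne') one_ne_zero).squarefree
    have hle : rootMultiplicity 1 ((X:ℝ[X])^m - C 1) ≤ 1 := by
      rw [rootMultiplicity_le_iff hne1]
      intro hdvd
      rw [pow_two] at hdvd
      exact Polynomial.not_isUnit_X_sub_C 1 (hsq _ hdvd)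
    have hge : 1 ≤ rootMultiplicity 1 ((X:ℝ[X])^m - C 1) :=
      (rootMultiplicity_pos hne1).mpr (by simp [IsRoot])
    simp only [hev, if_true]
    omega
  · have hodd : Odd m := Nat.not_even_iff_odd.mp hev
    rw [hodd.neg_one_pow]
    have h2 : rootMultiplicity 1 ((X:ℝ[X])^m - C (-1)) = 0 := by
      apply rootMultiplicity_eq_zero
      simp [IsRoot]
    rw [h2]
    simp [hev]

private lemma piFn_formula (κ d j m : ℕ) (hd : 0 < d) (hm : 0 < m) :
    piFn κ d ((-X)^(j+m) - (-X)^j)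
      = ((j:ℚ) + (j:ℚ) + (m:ℚ)) * κ / d
        + (((((m:ℤ)*(2*(κ:ℤ) - d))/(2*(d:ℤ)) - ((-(m:ℤ))/2) : ℤ) : ℚ))
        + (if Even m then (1:ℚ) else 0) / 2 := by
  rw [piFn, rm0 _ _ hm, natDeg _ _ hm, rm1 _ _ hm, argCount_eq κ d m j hd hm]
  have hdR : (0:ℝ) < d := by exact_mod_cast hd
  have hAB : (-(m:ℤ))/2 ≤ ((m:ℤ)*(2*(κ:ℤ) - d))/(2*(d:ℤ)) := by
    have e1 := floor_idn (-(m:ℤ)) 2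
    have e2 := floor_idn ((m:ℤ)*(2*(κ:ℤ) - (d:ℤ))) (2*d)
    push_cast at e1 e2
    rw [← e1, ← e2]
    apply Int.floor_mono
    have key : ((m:ℝ)*(2*(κ:ℝ) - d))/(2*(d:ℝ)) - (-(m:ℝ))/2 = (m:ℝ)*κ/d := by
      field_simp
      ring
    have hnn : (0:ℝ) ≤ (m:ℝ)*κ/d := by positivity
    linarith
  rw [Int.card_Ioc]
  have hcast : ((((m:ℤ)*(2*(κ:ℤ) - d))/(2*(d:ℤ)) - ((-(m:ℤ))/2)).toNat : ℚ)
      = (((((m:ℤ)*(2*(κ:ℤ) - d))/(2*(d:ℤ)) - ((-(m:ℤ))/2) : ℤ) : ℚ)) :=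
    Int.cast_injective.eq_iff.mpr ∘ id <| by
      exact_mod_cast congrArg (fun z : ℤ => (z : ℚ)) (Int.toNat_of_nonneg (sub_nonneg.mpr hAB))
  rw [hcast]
  have hifcast : ((if Even m then 1 else 0 : ℕ) : ℚ) = (if Even m then (1:ℚ) else 0) := by
    split <;> simp
  rw [hifcast]
  push_cast
  ring

/-- Proposition 8.3, first equation: with `e = d` if `4 ∣ d`, `e = 2d` if `d` is odd, and
`e = d/2` if `d ≡ 2 (mod 4)`, for integers `i > j ≥ 0` one has
`π_{κ/d}((−q)^{i+e} − (−q)^j) − π_{κ/d}((−q)^i − (−q)^j) = 2κe/d`. -/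
theorem piFn_shift_unitary (κ d : ℕ) (hd : 2 ≤ d) (hκ : 1 ≤ κ) (hcop : Nat.Coprime κ d)
    (e : ℕ)
    (he : (4 ∣ d ∧ e = d) ∨ (d % 2 = 1 ∧ e = 2 * d) ∨ (d % 4 = 2 ∧ 2 * e = d))
    (i j : ℕ) (hij : j < i) :
    piFn κ d ((-X) ^ (i + e) - (-X) ^ j) - piFn κ d ((-X) ^ i - (-X) ^ j) =
      2 * (κ : ℚ) * (e : ℚ) / (d : ℚ) := by
  have hd0 : 0 < d := by omega
  obtain ⟨m, rfl⟩ : ∃ m, i = j + m := ⟨i - j, by omega⟩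
  have hm : 0 < m := by omega
  have hrw : j + m + e = j + (m + e) := by omega
  rw [hrw, piFn_formula κ d j (m+e) hd0 (by omega), piFn_formula κ d j m hd0 hm]
  have hgcd : Nat.gcd κ d = 1 := hcop
  rcases he with ⟨hd4, rfl⟩ | ⟨hd2, rfl⟩ | ⟨hd42, hde⟩
  · -- e = d, 4 ∣ d
    obtain ⟨d₄, rfl⟩ := hd4
    have hd₄0 : 0 < d₄ := by omega
    have hkey : (↑(m+4*d₄) * (2*(κ:ℤ) - ↑(4*d₄))) / (2*(↑(4*d₄):ℤ)) - (-(↑(m+4*d₄):ℤ))/2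
        = (↑m * (2*(κ:ℤ) - ↑(4*d₄))) / (2*(↑(4*d₄):ℤ)) - (-(↑m:ℤ))/2 + κ := by
      have hnum : (↑(m+4*d₄) * (2*(κ:ℤ) - ↑(4*d₄)) : ℤ)
          = ↑m * (2*(κ:ℤ) - ↑(4*d₄)) + ((κ:ℤ) - 2*d₄) * (2*(↑(4*d₄):ℤ)) := by
        push_cast; ring
      rw [hnum, Int.add_mul_ediv_right _ _ (by push_cast; omega : (2*(↑(4*d₄):ℤ)) ≠ 0)]
      set NB := (↑m * (2*(κ:ℤ) - ↑(4*d₄))) / (2*(↑(4*d₄):ℤ)) with hNB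
      push_cast
      omega
    have hif : (if Even (m+4*d₄) then (1:ℚ) else 0) = if Even m then (1:ℚ) else 0 := by
      have h1 : Even (m+4*d₄) ↔ Even m := by
        simp only [Nat.even_iff]; omega
      rw [if_congr h1 rfl rfl]
    rw [hkey, hif]
    have hq : ((d₄:ℚ)) ≠ 0 := Nat.cast_ne_zero.mpr hd₄0.ne'
    push_cast
    field_simp
    ring
  · -- e = 2d, d odd
    have hkey : (↑(m+2*d) * (2*(κ:ℤ) - ↑d)) / (2*(↑d:ℤ)) - (-(↑(m+2*d):ℤ))/2
        = (↑m * (2*(κ:ℤ) - ↑d)) / (2*(↑d:ℤ)) - (-(↑m:ℤ))/2 + 2*κ := by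
      have hnum : (↑(m+2*d) * (2*(κ:ℤ) - ↑d) : ℤ)
          = ↑m * (2*(κ:ℤ) - ↑d) + (2*(κ:ℤ) - ↑d) * (2*(↑d:ℤ)) := by
        push_cast; ring
      rw [hnum, Int.add_mul_ediv_right _ _ (by omega : (2*(↑d:ℤ)) ≠ 0)]
      set NB := (↑m * (2*(κ:ℤ) - ↑d)) / (2*(↑d:ℤ)) with hNB
      push_cast
      omega
    have hif : (if Even (m+2*d) then (1:ℚ) else 0) = if Even m then (1:ℚ) else 0 := by
      have h1 : Even (m+2*d) ↔ Even m := by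
        simp only [Nat.even_iff]; omega
      rw [if_congr h1 rfl rfl]
    rw [hkey, hif]
    have hq : ((d:ℚ)) ≠ 0 := Nat.cast_ne_zero.mpr hd0.ne'
    push_cast
    field_simp
    ring
  · -- 2e = d, d ≡ 2 mod 4
    have hκ2 : κ % 2 = 1 := by
      rcases Nat.even_or_odd κ with hk | hk
      · exfalso
        obtain ⟨c, hc⟩ := hk
        have h2 : 2 ∣ Nat.gcd κ d := Nat.dvd_gcd ⟨c, by omega⟩ ⟨d/2, by omega⟩
        rw [hgcd] at h2
        omega
      · exact Nat.odd_iff.mp hk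
    have he2 : e % 2 = 1 := by omega
    obtain ⟨s, hs⟩ : ∃ s:ℤ, 2*(κ:ℤ) - (d:ℤ) = 4*s := ⟨(2*(κ:ℤ)-d)/4, by omega⟩
    obtain ⟨t, ht⟩ : ∃ t:ℤ, (e:ℤ) = 2*t+1 := ⟨((e:ℤ)-1)/2, by omega⟩
    have hdeZ : 2*(e:ℤ) = (d:ℤ) := by exact_mod_cast hde
    have hnum : (↑(m+e) * (2*(κ:ℤ) - ↑d) : ℤ)
        = ↑m * (2*(κ:ℤ) - ↑d) + s * (2*(↑d:ℤ)) := by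
      push_cast
      linear_combination (e:ℤ)*hs + 2*s*hdeZ
    have hd2z : (2*(↑d:ℤ)) ≠ 0 := by omega
    have hκQ : (κ:ℚ) = 2*s + 2*t + 1 := by
      have : (2*(κ:ℤ)) = 4*s + 2*(2*t+1) := by omega
      have h2 : (2*(κ:ℚ)) = 4*(s:ℚ) + 2*(2*(t:ℚ)+1) := by exact_mod_cast this
      linarith
    have hdQ : (d:ℚ) = 2*(2*(t:ℚ)+1) := by
      have : (d:ℤ) = 2*(2*t+1) := by omega
      exact_mod_cast this
    have heQ : (e:ℚ) = 2*(t:ℚ)+1 := by exact_mod_cast ht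
    have ht0 : (2*(2*(t:ℚ)+1)) ≠ 0 := by
      rw [← hdQ]
      exact Nat.cast_ne_zero.mpr hd0.ne'
    rcases Nat.even_or_odd m with hme | hmo
    · have hm2 : m % 2 = 0 := Nat.even_iff.mp hme
      have hkey : (↑(m+e) * (2*(κ:ℤ) - ↑d)) / (2*(↑d:ℤ)) - (-(↑(m+e):ℤ))/2
          = (↑m * (2*(κ:ℤ) - ↑d)) / (2*(↑d:ℤ)) - (-(↑m:ℤ))/2 + (s + t + 1) := by
        rw [hnum, Int.add_mul_ediv_right _ _ hd2z]
        set NB := (↑m * (2*(κ:ℤ) - ↑d)) / (2*(↑d:ℤ)) with hNB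
        push_cast
        omega
      have hif2 : (if Even (m+e) then (1:ℚ) else 0) = 0 := by
        have h1 : ¬ Even (m+e) := by simp only [Nat.even_iff]; omega
        rw [if_neg h1]
      have hif1 : (if Even m then (1:ℚ) else 0) = 1 := if_pos hme
      rw [hkey, hif2, hif1]
      push_cast
      rw [hκQ, hdQ, heQ]
      have ht1 : (2*(t:ℚ)+1) ≠ 0 := fun h => ht0 (by rw [h]; ring)
      field_simp
      ring
    · have hm2 : m % 2 = 1 := Nat.odd_iff.mp hmo
      have hkey : (↑(m+e) * (2*(κ:ℤ) - ↑d)) / (2*(↑d:ℤ)) - (-(↑(m+e):ℤ))/2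
          = (↑m * (2*(κ:ℤ) - ↑d)) / (2*(↑d:ℤ)) - (-(↑m:ℤ))/2 + (s + t) := by
        rw [hnum, Int.add_mul_ediv_right _ _ hd2z]
        set NB := (↑m * (2*(κ:ℤ) - ↑d)) / (2*(↑d:ℤ)) with hNB
        push_cast
        omega
      have hif2 : (if Even (m+e) then (1:ℚ) else 0) = 1 := by
        have h1 : Even (m+e) := by simp only [Nat.even_iff]; omega
        rw [if_pos h1]
      have hif1 : (if Even m then (1:ℚ) else 0) = 0 := by
        have h1 : ¬ Even m := Nat.not_even_iff_odd.mpr hmo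
        rw [if_neg h1]
      rw [hkey, hif2, hif1]
      push_cast
      rw [hκQ, hdQ, heQ]
      have ht1 : (2*(t:ℚ)+1) ≠ 0 := fun h => ht0 (by rw [h]; ring)
      field_simp
      ring
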